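/- Distance to a closed convex cone's dual as a max: let K ⊆ ℝ^m be a closed convex cone with dual cone K* = {v : ⟨v, u⟩ ≥ 0 ∀u ∈ K}. Then for any w ∈ ℝ^m, dist(w, K*) = max_{‖u‖ ≤ 1, u ∈ −K} ⟨w, u⟩. -/

import Mathlib

open scoped RealInnerProductSpace

/-- For a closed convex cone `K ⊆ ℝ^m` with dual cone
`K* = {v | ⟨v, u⟩ ≥ 0 ∀ u ∈ K}`, and any `w`, the distance `dist(w, K*)` equals the
maximum of `⟨w, u⟩` over `u ∈ -K` with `‖u‖ ≤ 1`. -/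
theorem dist_to_dual_cone_eq_max
    {m : ℕ} (K : Set (EuclideanSpace ℝ (Fin m)))
    (hKclosed : IsClosed K) (hKconv : Convex ℝ K)
    (hKcone : ∀ u ∈ K, ∀ c : ℝ, 0 ≤ c → c • u ∈ K)
    (hKne : K.Nonempty)
    (w : EuclideanSpace ℝ (Fin m)) :
    IsGreatest {r | ∃ u ∈ -K, ‖u‖ ≤ 1 ∧ r = ⟪w, u⟫}
      (Metric.infDist w {v | ∀ u ∈ K, 0 ≤ ⟪v, u⟫}) := by
  -- K as a ConvexCone
  have add_mem : ∀ {x y : EuclideanSpace ℝ (Fin m)}, x ∈ K → y ∈ K → x + y ∈ K := by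
    intro x y hx hy
    have h := hKconv hx hy (by norm_num : (0:ℝ) ≤ 1/2) (by norm_num : (0:ℝ) ≤ 1/2) (by norm_num)
    have h2 := hKcone _ h 2 (by norm_num)
    have : (2:ℝ) • ((1/2:ℝ) • x + (1/2:ℝ) • y) = x + y := by
      rw [smul_add, smul_smul, smul_smul]; norm_num
    rwa [this] at h2
  set Kc : ConvexCone ℝ (EuclideanSpace ℝ (Fin m)) :=
    { carrier := K
      smul_mem' := fun c hc x hx => hKcone x hx c hc.le
      add_mem' := fun x hx y hy => add_mem hx hy } with hKc
  -- the dual cone as a set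
  set S : Set (EuclideanSpace ℝ (Fin m)) := {v | ∀ u ∈ K, 0 ≤ ⟪v, u⟫} with hS
  have hSdual : S = (ProperCone.innerDual (K : Set (EuclideanSpace ℝ (Fin m))) :
      Set (EuclideanSpace ℝ (Fin m))) := by
    ext v
    simp only [hS, Set.mem_setOf_eq, SetLike.mem_coe, ProperCone.mem_innerDual]
    constructor
    · intro h x hx; rw [real_inner_comm]; exact h x hx
    · intro h x hx; rw [real_inner_comm]; exact h hx
  have hSconv : Convex ℝ S := hSdual ▸
    (ProperCone.innerDual (K : Set (EuclideanSpace ℝ (Fin m)))).convex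
  have hSclosed : IsClosed S := hSdual ▸ (ProperCone.innerDual K).isClosed
  have hSne : S.Nonempty := ⟨0, fun u _ => by simp⟩
  -- 0 ∈ K
  obtain ⟨k0, hk0⟩ := hKne
  have h0K : (0 : EuclideanSpace ℝ (Fin m)) ∈ K := by
    have := hKcone k0 hk0 0 le_rfl
    rwa [zero_smul] at this
  -- projection of w onto S
  obtain ⟨z, hzS, hz⟩ :=
    exists_norm_eq_iInf_of_complete_convex hSne hSclosed.isComplete hSconv w
  have hinner : ∀ x ∈ S, ⟪w - z, x - z⟫ ≤ 0 :=
    (norm_eq_iInf_iff_real_inner_le_zero hSconv hzS).1 hz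
  -- infDist w S = ‖w - z‖
  have hdist : Metric.infDist w S = ‖w - z‖ := by
    rw [Metric.infDist_eq_iInf]
    simp_rw [dist_eq_norm]
    exact hz.symm
  set q : EuclideanSpace ℝ (Fin m) := w - z with hq
  have hSadd : ∀ x ∈ S, x + z ∈ S := fun x hx u hu => by
    rw [inner_add_left]
    exact add_nonneg (hx u hu) (hzS u hu)
  have hqx : ∀ x ∈ S, ⟪q, x⟫ ≤ 0 := by
    intro x hx
    have := hinner (x + z) (hSadd x hx)
    rwa [add_sub_cancel_right] at this
  have hqz : ⟪q, z⟫ = 0 := by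
    have h1 : ⟪q, z⟫ ≤ 0 := hqx z hzS
    have h0 : (0 : EuclideanSpace ℝ (Fin m)) ∈ S := fun u _ => by simp
    have h2 := hinner 0 h0
    rw [zero_sub, inner_neg_right] at h2
    linarith
  -- -q ∈ K via the bipolar theorem
  have hbip : (ProperCone.innerDual (ProperCone.innerDual (K : Set (EuclideanSpace ℝ (Fin m))) :
      Set (EuclideanSpace ℝ (Fin m))) : Set (EuclideanSpace ℝ (Fin m))) = K := by
    have := ProperCone.innerDual_innerDual (E := EuclideanSpace ℝ (Fin m))
      { carrier := K, add_mem' := fun hx hy => add_mem hx hy, zero_mem' := h0K,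
        smul_mem' := fun c x hx => hKcone x hx c c.2, isClosed' := hKclosed }
    exact congrArg SetLike.coe this
  have hnegqK : -q ∈ K := by
    have hmem : -q ∈ (ProperCone.innerDual (ProperCone.innerDual (K : Set (EuclideanSpace ℝ (Fin m))) :
        Set (EuclideanSpace ℝ (Fin m))) : Set (EuclideanSpace ℝ (Fin m))) := by
      rw [SetLike.mem_coe, ProperCone.mem_innerDual]
      intro x hx
      rw [SetLike.mem_coe] at hx
      have hxS : x ∈ S := by rw [hSdual]; exact hx
      have := hqx x hxS
      rw [inner_neg_right, real_inner_comm]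
      linarith
    rw [hbip] at hmem
    exact hmem
  constructor
  · -- membership: the max is attained
    by_cases hq0 : q = 0
    · refine ⟨0, ?_, by simp, by simp [hdist, hq0]⟩
      rw [Set.mem_neg, neg_zero]; exact h0K
    · refine ⟨‖q‖⁻¹ • q, ?_, ?_, ?_⟩
      · rw [Set.mem_neg, ← smul_neg]
        exact hKcone _ hnegqK _ (inv_nonneg.2 (norm_nonneg q))
      · rw [norm_smul, norm_inv, norm_norm, inv_mul_cancel₀ (norm_ne_zero_iff.2 hq0)]
      · rw [hdist, real_inner_smul_right]
        have hwq : ⟪w, q⟫ = ‖q‖ ^ 2 := by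
          have hw : w = q + z := by rw [hq]; abel
          have hzq : ⟪z, q⟫ = 0 := by rwa [real_inner_comm] at hqz
          rw [hw, inner_add_left, hzq, add_zero, real_inner_self_eq_norm_sq]
        rw [hwq]
        field_simp [norm_ne_zero_iff.2 hq0]
  · -- upper bound
    rintro r ⟨u, huK, hu1, rfl⟩
    rw [Set.mem_neg] at huK
    rw [hdist]
    have h1 : ⟪z, u⟫ ≤ 0 := by
      have := hzS (-u) huK
      rw [inner_neg_right] at this
      linarith
    calc ⟪w, u⟫ = ⟪q, u⟫ + ⟪z, u⟫ := by
          rw [← inner_add_left]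
          congr 1
          rw [hq]; abel
      _ ≤ ⟪q, u⟫ := by linarith
      _ ≤ ‖q‖ * ‖u‖ := real_inner_le_norm q u
      _ ≤ ‖q‖ * 1 := mul_le_mul_of_nonneg_left hu1 (norm_nonneg q)
      _ = ‖w - z‖ := by rw [mul_one]
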